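/- Duality for the cross-ratio system: let z0, z1, z2, z3, α1, α2 ∈ ℂ with z0 ≠ z1, z1 ≠ z2, z2 ≠ z3, z3 ≠ z0, α1 ≠ 0 and α2 ≠ 0, and suppose ((z0 − z1)(z2 − z3))/((z1 − z2)(z3 − z0)) = α1/α2. Let Z0 ∈ ℂ be arbitrary and set Z1 := Z0 + α1/(z0 − z1), Z2 := Z1 + α2/(z1 − z2), Z3 := Z2 + α1/(z2 − z3). Then Z0 − Z3 = α2/(z3 − z0), and the dual quadruple satisfies the same cross-ratio equation: ((Z0 − Z1)(Z2 − Z3))/((Z1 − Z2)(Z3 − Z0)) = α1/α2. -/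

import Mathlib

theorem cross_ratio_duality
    (z0 z1 z2 z3 α1 α2 : ℂ)
    (h01 : z0 ≠ z1) (h12 : z1 ≠ z2) (h23 : z2 ≠ z3) (h30 : z3 ≠ z0)
    (hα1 : α1 ≠ 0) (hα2 : α2 ≠ 0)
    (hcr : (z0 - z1) * (z2 - z3) / ((z1 - z2) * (z3 - z0)) = α1 / α2)
    (Z0 Z1 Z2 Z3 : ℂ)
    (hZ1 : Z1 = Z0 + α1 / (z0 - z1))
    (hZ2 : Z2 = Z1 + α2 / (z1 - z2))
    (hZ3 : Z3 = Z2 + α1 / (z2 - z3)) :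
    Z0 - Z3 = α2 / (z3 - z0) ∧
      (Z0 - Z1) * (Z2 - Z3) / ((Z1 - Z2) * (Z3 - Z0)) = α1 / α2 := by
  have d01 : z0 - z1 ≠ 0 := sub_ne_zero.mpr h01
  have d12 : z1 - z2 ≠ 0 := sub_ne_zero.mpr h12
  have d23 : z2 - z3 ≠ 0 := sub_ne_zero.mpr h23
  have d30 : z3 - z0 ≠ 0 := sub_ne_zero.mpr h30
  field_simp at hcr
  have h1 : Z0 - Z3 = α2 / (z3 - z0) := by
    subst hZ1 hZ2 hZ3
    field_simp
    linear_combination (z0 - z1 + z2 - z3) * hcr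
  refine ⟨h1, ?_⟩
  have e1 : Z0 - Z1 = -(α1 / (z0 - z1)) := by rw [hZ1]; ring
  have e2 : Z2 - Z3 = -(α1 / (z2 - z3)) := by rw [hZ3]; ring
  have e3 : Z1 - Z2 = -(α2 / (z1 - z2)) := by rw [hZ2]; ring
  have e4 : Z3 - Z0 = -(α2 / (z3 - z0)) := by rw [← neg_sub, h1]
  rw [e1, e2, e3, e4]
  field_simp
  linear_combination (-1 : ℂ) * hcr
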